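/- Let c₂ = ∑_{l=1}^∞ 2^{−l}·l·ln l and S = c₂/ln 2. For every ε > 0 there exist d₀ > 0 and κ < ∞ such that for all 0 < d < d₀, with ℓ = ⌊8/d⌋: | ∑_{l=1}^{ℓ} 2^{−l}·2^{d(l log₂ l − S l/2)} − 1 | ≤ κ·d^{2−ε}. -/

import Mathlib

open Real

/-- `c₂ = ∑_{l≥1} 2^{-l} l ln l`. -/
noncomputable def c2 : ℝ := ∑' l : ℕ+, (2 : ℝ) ^ (-((l : ℕ) : ℤ)) * (l : ℝ) * Real.log (l : ℝ)

/-- `S = c₂ / ln 2`. -/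
noncomputable def Sconst : ℝ := c2 / Real.log 2

/-- the ℕ-indexed version of the c2 summand -/
noncomputable def w (l : ℕ) : ℝ := (2⁻¹ : ℝ) ^ l * ((l : ℝ) * Real.log l)

lemma w_nonneg (l : ℕ) : 0 ≤ w l := by
  unfold w
  rcases Nat.eq_zero_or_pos l with h | h
  · simp [h]
  · have : (1:ℝ) ≤ l := by exact_mod_cast h
    positivity

lemma log_nat_le (l : ℕ) : Real.log l ≤ l := by
  rcases Nat.eq_zero_or_pos l with h | h
  · simp [h]
  · exact (Real.log_le_sub_one_of_pos (by exact_mod_cast h)).trans (by simp)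

lemma summable_w : Summable w := by
  have hg : Summable (fun l : ℕ => (l:ℝ)^2 * (2⁻¹:ℝ)^l) :=
    summable_pow_mul_geometric_of_norm_lt_one 2 (by rw [norm_inv]; norm_num)
  refine Summable.of_nonneg_of_le w_nonneg (fun l => ?_) hg
  unfold w
  have h1 := log_nat_le l
  have h2 : (0:ℝ) ≤ l := by positivity
  have h3 : (0:ℝ) ≤ (2⁻¹:ℝ)^l := by positivity
  calc (2⁻¹ : ℝ) ^ l * ((l : ℝ) * Real.log l) ≤ (2⁻¹ : ℝ) ^ l * ((l:ℝ) * l) := by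
        apply mul_le_mul_of_nonneg_left (by nlinarith) h3
    _ = (l:ℝ)^2 * (2⁻¹:ℝ)^l := by ring

lemma c2_eq : c2 = ∑' l : ℕ, w l := by
  have e : ∀ n : ℕ, (2 : ℝ) ^ (-(((n.succPNat : ℕ+) : ℕ) : ℤ)) * (((n.succPNat : ℕ+)) : ℝ) *
      Real.log ((n.succPNat : ℕ+) : ℝ) = w (n + 1) := by
    intro n
    have : ((n.succPNat : ℕ+) : ℕ) = n + 1 := rfl
    rw [this]
    unfold w
    rw [zpow_neg, zpow_natCast]
    push_cast
    simp only [inv_pow]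
    ring
  have := (Equiv.pnatEquivNat.symm.tsum_eq
    (fun l : ℕ+ => (2 : ℝ) ^ (-((l : ℕ) : ℤ)) * (l : ℝ) * Real.log (l : ℝ)))
  rw [c2, ← this]
  have h2 : ∀ n : ℕ, Equiv.pnatEquivNat.symm n = n.succPNat := fun n => rfl
  simp only [h2, e]
  have hs := Summable.sum_add_tsum_nat_add 1 summable_w
  have hw0 : w 0 = 0 := by unfold w; simp
  rw [← hs]
  simp [hw0]

lemma c2_nonneg : 0 ≤ c2 := by rw [c2_eq]; exact tsum_nonneg w_nonneg

noncomputable def aa (l : ℕ) : ℝ := (l : ℝ) * Real.log l - c2 * l / 2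
noncomputable def hh (l : ℕ) : ℝ := (2⁻¹ : ℝ) ^ l * aa l

lemma summable_lin : Summable (fun l : ℕ => (2⁻¹:ℝ)^l * l) := by
  have := summable_pow_mul_geometric_of_norm_lt_one (R := ℝ) 1 (r := 2⁻¹) (by rw [norm_inv]; norm_num)
  simpa [mul_comm] using this

lemma tsum_lin : ∑' l : ℕ, (2⁻¹:ℝ)^l * l = 2 := by
  have := tsum_coe_mul_geometric_of_norm_lt_one (𝕜 := ℝ) (r := 2⁻¹) (by rw [norm_inv]; norm_num)
  have h2 : ∀ l : ℕ, (2⁻¹:ℝ)^l * l = (l:ℝ) * (2⁻¹:ℝ)^l := fun l => mul_comm _ _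
  rw [tsum_congr h2, this]; norm_num

lemma hh_eq (l : ℕ) : hh l = w l - (c2/2) * ((2⁻¹:ℝ)^l * l) := by
  unfold hh aa w; ring

lemma summable_hh : Summable hh := by
  rw [show hh = fun l => w l - (c2/2) * ((2⁻¹:ℝ)^l * l) from funext hh_eq]
  exact summable_w.sub (summable_lin.mul_left _)

lemma tsum_hh : ∑' l : ℕ, hh l = 0 := by
  rw [show hh = fun l => w l - (c2/2) * ((2⁻¹:ℝ)^l * l) from funext hh_eq]
  rw [Summable.tsum_sub summable_w (summable_lin.mul_left _), tsum_mul_left, tsum_lin, ← c2_eq]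
  ring

lemma aa_abs_le (l : ℕ) : |aa l| ≤ (1 + c2) * (l:ℝ)^2 := by
  unfold aa
  rcases Nat.eq_zero_or_pos l with h | h
  · simp [h]
  · have h1 : (1:ℝ) ≤ l := by exact_mod_cast h
    have h2 := log_nat_le l
    have h3 : 0 ≤ Real.log l := Real.log_natCast_nonneg l
    have h4 := c2_nonneg
    rw [abs_le]; constructor <;> nlinarith [sq_nonneg ((l:ℝ) - 1)]

noncomputable def rr : ℝ := (Real.sqrt 2)⁻¹

lemma sqrt2_pos : 0 < Real.sqrt 2 := Real.sqrt_pos.2 (by norm_num)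
lemma one_lt_sqrt2 : 1 < Real.sqrt 2 := by
  nlinarith [Real.sq_sqrt (by norm_num : (2:ℝ) ≥ 0), sqrt2_pos]
lemma rr_pos : 0 < rr := by unfold rr; positivity
lemma rr_lt_one : rr < 1 := by
  unfold rr
  rw [inv_lt_one_iff₀]; right; exact one_lt_sqrt2
lemma rr_sq : rr * rr = 2⁻¹ := by
  unfold rr
  rw [← mul_inv]
  rw [Real.mul_self_sqrt (by norm_num : (0:ℝ) ≤ 2)]

lemma half_pow_le {L l : ℕ} (h : L ≤ l) : (2⁻¹:ℝ)^l ≤ rr^L * rr^l := by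
  have h1 : (2⁻¹:ℝ)^l = rr^l * rr^l := by rw [← mul_pow, rr_sq]
  rw [h1]
  have h2 : rr^l ≤ rr^L := pow_le_pow_of_le_one rr_pos.le rr_lt_one.le h
  exact mul_le_mul_of_nonneg_right h2 (pow_nonneg rr_pos.le l)

lemma exp_log2_half : Real.exp (Real.log 2 / 2) = Real.sqrt 2 := by
  rw [show Real.sqrt 2 = (2:ℝ) ^ ((2:ℝ)⁻¹) by
    rw [Real.sqrt_eq_rpow]; norm_num]
  rw [Real.rpow_def_of_pos (by norm_num)]
  ring_nf

lemma exp_le_sqrt2_pow {x : ℝ} {l : ℕ} (h : x ≤ l * (Real.log 2 / 2)) :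
    Real.exp x ≤ (Real.sqrt 2) ^ l := by
  calc Real.exp x ≤ Real.exp (l * (Real.log 2 / 2)) := Real.exp_le_exp.2 h
    _ = (Real.sqrt 2) ^ l := by rw [Real.exp_nat_mul, exp_log2_half]

lemma half_mul_sqrt2_pow (l : ℕ) : (2⁻¹:ℝ)^l * (Real.sqrt 2)^l = rr^l := by
  rw [← mul_pow]
  congr 1
  unfold rr
  refine eq_inv_of_mul_eq_one_left ?_
  have h := Real.mul_self_sqrt (by norm_num : (0:ℝ) ≤ 2)
  nlinarith

lemma neg_mul_log_le (d : ℝ) (hd : 0 < d) : d * (- Real.log d) ≤ 2 * Real.sqrt d := by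
  have hs : 0 < Real.sqrt d := Real.sqrt_pos.2 hd
  have h1 : Real.log (Real.sqrt d) = Real.log d / 2 := Real.log_sqrt hd.le
  have h2 : Real.log (Real.sqrt d)⁻¹ ≤ (Real.sqrt d)⁻¹ - 1 :=
    Real.log_le_sub_one_of_pos (by positivity)
  rw [Real.log_inv] at h2
  have h3 : - Real.log d ≤ 2 / Real.sqrt d := by
    have h4 : - Real.log d = 2 * (- Real.log (Real.sqrt d)) := by rw [h1]; ring
    rw [h4, div_eq_mul_inv]
    have h5 : (0:ℝ) < (Real.sqrt d)⁻¹ := by positivity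
    nlinarith
  calc d * (- Real.log d) ≤ d * (2 / Real.sqrt d) := by
        apply mul_le_mul_of_nonneg_left h3 hd.le
    _ = 2 * (d / Real.sqrt d) := by ring
    _ = 2 * Real.sqrt d := by rw [Real.div_sqrt]

lemma sqrt_le_tenth {d : ℝ} (hd : 0 ≤ d) (h : d ≤ 1/100) : Real.sqrt d ≤ 1/10 := by
  have := Real.sqrt_le_sqrt h
  rwa [show (1/100:ℝ) = (1/10)^2 by norm_num, Real.sqrt_sq (by norm_num)] at this

lemma term_eq (d : ℝ) (l : ℕ) :
    (2 : ℝ) ^ (-(l : ℝ)) * (2 : ℝ) ^ (d * ((l : ℝ) * Real.logb 2 (l : ℝ) - Sconst * (l : ℝ) / 2))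
      = (2⁻¹:ℝ)^l * Real.exp (d * aa l) := by
  have hlog2 : Real.log 2 ≠ 0 := by
    have := Real.log_pos (by norm_num : (1:ℝ) < 2); linarith
  rw [Real.rpow_def_of_pos (by norm_num : (0:ℝ) < 2),
      Real.rpow_def_of_pos (by norm_num : (0:ℝ) < 2)]
  have h1 : Real.log 2 * (d * ((l : ℝ) * Real.logb 2 (l : ℝ) - Sconst * (l : ℝ) / 2))
      = d * aa l := by
    unfold aa Sconst Real.logb
    field_simp
  rw [h1]
  congr 1
  rw [show (2⁻¹:ℝ)^l = Real.exp (Real.log (2⁻¹:ℝ))^l by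
        rw [Real.exp_log (by norm_num)]]
  rw [← Real.exp_nat_mul, Real.log_inv]
  ring_nf

lemma exp_taylor_bound (x : ℝ) : |Real.exp x - 1 - x| ≤ x^2 * Real.exp |x| := by
  have h1 : x + 1 ≤ Real.exp x := Real.add_one_le_exp x
  have h2 : (-x) + 1 ≤ Real.exp (-x) := Real.add_one_le_exp (-x)
  have h3 : Real.exp (-x) * Real.exp x = 1 := by
    rw [← Real.exp_add]; simp
  have hp := Real.exp_pos x
  have hp' := Real.exp_pos (-x)
  rw [abs_of_nonneg (by linarith)]
  rcases le_total 0 x with hx | hx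
  · rw [abs_of_nonneg hx]
    nlinarith [mul_nonneg (sq_nonneg x) hp.le]
  · rw [abs_of_nonpos hx]
    have h4 : 1 ≤ Real.exp (-x) := by nlinarith
    nlinarith [mul_nonneg (sq_nonneg x) hp'.le]

lemma exp_neg_le_quad {x : ℝ} (hx : 0 < x) : Real.exp (-x) ≤ 4 / x^2 := by
  have h1 : x/2 + 1 ≤ Real.exp (x/2) := Real.add_one_le_exp (x/2)
  have h2 : Real.exp (x/2) * Real.exp (x/2) = Real.exp x := by
    rw [← Real.exp_add]; ring_nf
  have h3 : Real.exp (-x) * Real.exp x = 1 := by rw [← Real.exp_add]; simp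
  have hp := Real.exp_pos x
  have hq := Real.exp_pos (-x)
  rw [div_eq_mul_inv]
  have hx2 : 0 < (x^2)⁻¹ := by positivity
  have key : x^2 ≤ 4 * Real.exp x := by nlinarith
  calc Real.exp (-x) = (Real.exp x)⁻¹ := by
        rw [Real.exp_neg]
    _ ≤ 4 * (x^2)⁻¹ := by
        rw [inv_le_iff_one_le_mul₀ hp]
        have : (x^2)⁻¹ * x^2 = 1 := by field_simp
        calc (1:ℝ) = (x^2)⁻¹ * x^2 := this.symm
          _ ≤ (x^2)⁻¹ * (4 * Real.exp x) := by
              apply mul_le_mul_of_nonneg_left key hx2.le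
          _ = 4 * (x^2)⁻¹ * Real.exp x := by ring

lemma exp_neg_le_lin {x : ℝ} (hx : 0 < x) : Real.exp (-x) ≤ 1 / x := by
  have h1 : x + 1 ≤ Real.exp x := Real.add_one_le_exp x
  have h3 : Real.exp (-x) * Real.exp x = 1 := by rw [← Real.exp_add]; simp
  have hq := Real.exp_pos (-x)
  rw [le_div_iff₀ hx]
  nlinarith


lemma key_exp_bound {d : ℝ} (hd : 0 < d) (hd1 : d ≤ 1/100) (hd2 : d ≤ 1/(10*(1+c2)))
    {l : ℕ} (hl : 1 ≤ l) (hl2 : (l:ℝ) ≤ 8/d) : d * |aa l| ≤ l * (Real.log 2 / 2) := by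
  have hl1 : (1:ℝ) ≤ l := by exact_mod_cast hl
  have hlog_nonneg : 0 ≤ Real.log l := Real.log_natCast_nonneg l
  have hc2 := c2_nonneg
  have habs : |aa l| ≤ (l:ℝ) * (Real.log l + c2/2) := by
    unfold aa
    rw [abs_le]; constructor <;> nlinarith
  have hlogl : Real.log l ≤ Real.log 8 - Real.log d := by
    rw [← Real.log_div (by norm_num) hd.ne']
    exact Real.log_le_log (by linarith) hl2
  have hinner : d * (Real.log l + c2/2) ≤ Real.log 2 / 2 := by
    have h8 : Real.log 8 = 3 * Real.log 2 := by
      rw [show (8:ℝ) = 2^3 by norm_num, Real.log_pow]; push_cast; ring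
    have hlt := Real.log_two_lt_d9
    have hgt := Real.log_two_gt_d9
    have h2 : d * (- Real.log d) ≤ 2 * Real.sqrt d := neg_mul_log_le d hd
    have h3 : Real.sqrt d ≤ 1/10 := sqrt_le_tenth hd.le hd1
    have h4 : d * c2 ≤ 1/10 := by
      have hpos : (0:ℝ) < 10*(1+c2) := by linarith
      have := mul_le_mul_of_nonneg_right hd2 hc2
      calc d * c2 ≤ 1/(10*(1+c2)) * c2 := this
        _ ≤ 1/10 := by
          rw [div_mul_eq_mul_div, div_le_div_iff₀ hpos (by norm_num)]
          nlinarith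
    have h5 : d * Real.log l ≤ d * (Real.log 8 - Real.log d) :=
      mul_le_mul_of_nonneg_left hlogl hd.le
    nlinarith
  calc d * |aa l| ≤ d * ((l:ℝ) * (Real.log l + c2/2)) :=
        mul_le_mul_of_nonneg_left habs hd.le
    _ = (l:ℝ) * (d * (Real.log l + c2/2)) := by ring
    _ ≤ (l:ℝ) * (Real.log 2 / 2) := mul_le_mul_of_nonneg_left hinner (by linarith)

lemma floor_ge {d : ℝ} (hd : 0 < d) : 8/d - 1 ≤ (Nat.floor (8/d) : ℝ) := by
  have := Nat.lt_floor_add_one (8/d)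
  linarith

lemma pow_half_L_le {d : ℝ} (hd : 0 < d) (hd1 : d ≤ 1/100) :
    (2⁻¹:ℝ) ^ (Nat.floor (8/d)) ≤ d^2 := by
  set L := Nat.floor (8/d) with hLdef
  have hL : 8/d - 1 ≤ (L:ℝ) := floor_ge hd
  have hlog2 := Real.log_two_gt_d9
  have hx : 0 < 8 * Real.log 2 / d := by
    apply div_pos (by nlinarith) hd
  have e1 : (2⁻¹:ℝ)^L = Real.exp ((L:ℝ) * Real.log 2⁻¹) := by
    rw [Real.exp_nat_mul, Real.exp_log (by norm_num)]
  have e2 : (L:ℝ) * Real.log 2⁻¹ ≤ Real.log 2 - 8 * Real.log 2 / d := by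
    rw [Real.log_inv]
    have : (8/d - 1) * Real.log 2 ≤ (L:ℝ) * Real.log 2 := by
      apply mul_le_mul_of_nonneg_right hL (by nlinarith)
    have hdiv : (8/d) * Real.log 2 = 8 * Real.log 2 / d := by ring
    nlinarith
  calc (2⁻¹:ℝ)^L = Real.exp ((L:ℝ) * Real.log 2⁻¹) := e1
    _ ≤ Real.exp (Real.log 2 - 8 * Real.log 2 / d) := Real.exp_le_exp.2 e2
    _ = Real.exp (Real.log 2) * Real.exp (-(8 * Real.log 2 / d)) := by
        rw [← Real.exp_add]; ring_nf
    _ = 2 * Real.exp (-(8 * Real.log 2 / d)) := by rw [Real.exp_log (by norm_num)]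
    _ ≤ 2 * (4 / (8 * Real.log 2 / d)^2) := by
        have := exp_neg_le_quad hx
        nlinarith
    _ = d^2 / (8 * (Real.log 2)^2) := by
        field_simp
        ring
    _ ≤ d^2 := by
        rw [div_le_iff₀ (by nlinarith)]
        have h1 : (1:ℝ) ≤ 8*(Real.log 2)^2 := by nlinarith
        nlinarith [mul_le_mul_of_nonneg_left h1 (sq_nonneg d)]

lemma rr_L_le {d : ℝ} (hd : 0 < d) (hd1 : d ≤ 1/100) :
    rr ^ (Nat.floor (8/d)) ≤ d := by
  set L := Nat.floor (8/d) with hLdef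
  have hL : 8/d - 1 ≤ (L:ℝ) := floor_ge hd
  have hlog2 := Real.log_two_gt_d9
  have hs2 := sqrt2_pos
  have hs2' : Real.sqrt 2 * Real.sqrt 2 = 2 := Real.mul_self_sqrt (by norm_num)
  have hs2le : Real.sqrt 2 ≤ 3/2 := by nlinarith
  have hy : 0 < 4 * Real.log 2 / d := by
    apply div_pos (by nlinarith) hd
  have e0 : Real.log rr = -(Real.log 2 / 2) := by
    unfold rr
    rw [Real.log_inv, Real.log_sqrt (by norm_num)]
  have e1 : rr^L = Real.exp ((L:ℝ) * Real.log rr) := by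
    rw [Real.exp_nat_mul, Real.exp_log rr_pos]
  have e2 : (L:ℝ) * Real.log rr ≤ Real.log 2 / 2 - 4 * Real.log 2 / d := by
    rw [e0]
    have : (8/d - 1) * (Real.log 2 / 2) ≤ (L:ℝ) * (Real.log 2 / 2) := by
      apply mul_le_mul_of_nonneg_right hL (by nlinarith)
    have hdiv : (8/d) * (Real.log 2 / 2) = 4 * Real.log 2 / d := by ring
    nlinarith
  calc rr^L = Real.exp ((L:ℝ) * Real.log rr) := e1
    _ ≤ Real.exp (Real.log 2 / 2 - 4 * Real.log 2 / d) := Real.exp_le_exp.2 e2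
    _ = Real.exp (Real.log 2 / 2) * Real.exp (-(4 * Real.log 2 / d)) := by
        rw [← Real.exp_add]; ring_nf
    _ ≤ (3/2) * (1 / (4 * Real.log 2 / d)) := by
        have h1 := exp_neg_le_lin hy
        have h2 : Real.exp (Real.log 2 / 2) ≤ 3/2 := by
          rw [exp_log2_half]; exact hs2le
        have h3 : 0 < Real.exp (-(4 * Real.log 2 / d)) := Real.exp_pos _
        have h4 : 0 < 1 / (4 * Real.log 2 / d) := by positivity
        nlinarith
    _ = (3/2) * (d / (4 * Real.log 2)) := by
        congr 1
        field_simp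
    _ ≤ d := by
        have h : d / (4 * Real.log 2) ≤ d / 2 :=
          div_le_div_of_nonneg_left hd.le (by norm_num) (by nlinarith)
        linarith

set_option maxHeartbeats 2000000 in
theorem stmt_16 :
    ∀ ε : ℝ, 0 < ε →
      ∃ d₀ : ℝ, 0 < d₀ ∧ ∃ κ : ℝ,
        ∀ d : ℝ, 0 < d → d < d₀ →
          |(∑ l ∈ Finset.Icc 1 (Nat.floor (8 / d)),
              (2 : ℝ) ^ (-(l : ℝ)) *
                (2 : ℝ) ^ (d * ((l : ℝ) * Real.logb 2 (l : ℝ) - Sconst * (l : ℝ) / 2))) - 1| ≤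
            κ * d ^ (2 - ε) := by
  intro ε hε
  have hc2 := c2_nonneg
  have hc2p : (0:ℝ) < 10 * (1 + c2) := by linarith
  refine ⟨min (1/100) (1/(10*(1+c2))), lt_min (by norm_num) (by positivity), ?_⟩
  -- constants
  have hrrn : ‖rr‖ < 1 := by rw [Real.norm_eq_abs, abs_of_pos rr_pos]; exact rr_lt_one
  have hsum2 : Summable (fun l : ℕ => (l:ℝ)^2 * rr^l) :=
    summable_pow_mul_geometric_of_norm_lt_one 2 hrrn
  have hsum4 : Summable (fun l : ℕ => (l:ℝ)^4 * rr^l) :=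
    summable_pow_mul_geometric_of_norm_lt_one 4 hrrn
  set K2 := ∑' l : ℕ, (l:ℝ)^2 * rr^l with hK2def
  set K4 := ∑' l : ℕ, (l:ℝ)^4 * rr^l with hK4def
  have hrrnn : (0:ℝ) ≤ rr := rr_pos.le
  have hK2nn : 0 ≤ K2 := tsum_nonneg (fun l => mul_nonneg (by positivity) (pow_nonneg hrrnn l))
  have hK4nn : 0 ≤ K4 := tsum_nonneg (fun l => mul_nonneg (by positivity) (pow_nonneg hrrnn l))
  refine ⟨(1+c2)^2 * K4 + (1+c2) * K2 + 1, ?_⟩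
  intro d hd hdlt
  have hd1 : d ≤ 1/100 := le_of_lt (lt_of_lt_of_le hdlt (min_le_left _ _))
  have hd2 : d ≤ 1/(10*(1+c2)) := le_of_lt (lt_of_lt_of_le hdlt (min_le_right _ _))
  set L := Nat.floor (8/d) with hLdef
  -- rewrite the terms
  have hterm : (∑ l ∈ Finset.Icc 1 L,
      (2 : ℝ) ^ (-(l : ℝ)) *
        (2 : ℝ) ^ (d * ((l : ℝ) * Real.logb 2 (l : ℝ) - Sconst * (l : ℝ) / 2)))
      = ∑ l ∈ Finset.Icc 1 L, (2⁻¹:ℝ)^l * Real.exp (d * aa l) :=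
    Finset.sum_congr rfl (fun l _ => term_eq d l)
  -- decomposition
  have hdecomp : ∑ l ∈ Finset.Icc 1 L, (2⁻¹:ℝ)^l * Real.exp (d * aa l)
      = (∑ l ∈ Finset.Icc 1 L, (2⁻¹:ℝ)^l * (Real.exp (d * aa l) - 1 - d * aa l))
        + d * (∑ l ∈ Finset.Icc 1 L, hh l)
        + ∑ l ∈ Finset.Icc 1 L, (2⁻¹:ℝ)^l := by
    rw [Finset.mul_sum, ← Finset.sum_add_distrib, ← Finset.sum_add_distrib]
    refine Finset.sum_congr rfl (fun l _ => ?_)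
    unfold hh; ring
  -- geometric sum
  have hG : ∑ l ∈ Finset.Icc 1 L, (2⁻¹:ℝ)^l = 1 - (2⁻¹:ℝ)^L := by
    rw [← Finset.Ico_add_one_right_eq_Icc, Finset.sum_Ico_eq_sum_range]
    simp only [Nat.add_sub_cancel]
    have : ∀ i : ℕ, (2⁻¹:ℝ)^(1+i) = 2⁻¹ * (2⁻¹:ℝ)^i := fun i => by rw [pow_add, pow_one]
    rw [Finset.sum_congr rfl (fun i _ => this i), ← Finset.mul_sum,
      geom_sum_eq (by norm_num : (2⁻¹:ℝ) ≠ 1)]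
    field_simp
    ring
  -- Hsum as tail
  have hh0 : hh 0 = 0 := by unfold hh aa; simp
  have hicc : ∑ l ∈ Finset.Icc 1 L, hh l = ∑ l ∈ Finset.range (L+1), hh l := by
    rw [Finset.sum_range_succ' (fun l => hh l) L, hh0, add_zero,
      ← Finset.Ico_add_one_right_eq_Icc, Finset.sum_Ico_eq_sum_range]
    simp only [Nat.add_sub_cancel]
    exact Finset.sum_congr rfl (fun i _ => by rw [add_comm])
  have htailrel := Summable.sum_add_tsum_nat_add (L+1) summable_hh
  have hHsum : ∑ l ∈ Finset.Icc 1 L, hh l = - ∑' i : ℕ, hh (i + (L+1)) := by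
    rw [hicc]; rw [tsum_hh] at htailrel; linarith
  -- tail bound
  have hshift : Summable (fun i : ℕ => hh (i + (L+1))) :=
    (summable_nat_add_iff (L+1)).2 summable_hh
  have hshift2 : Summable (fun i : ℕ => ((i + (L+1) : ℕ):ℝ)^2 * rr^(i + (L+1))) :=
    (summable_nat_add_iff (L+1)).2 hsum2
  have hperterm : ∀ i : ℕ, |hh (i + (L+1))|
      ≤ (1+c2) * rr^L * (((i + (L+1) : ℕ):ℝ)^2 * rr^(i + (L+1))) := by
    intro i
    set l := i + (L+1) with hl
    have hLl : L ≤ l := by omega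
    have h1 : |hh l| = (2⁻¹:ℝ)^l * |aa l| := by
      unfold hh; rw [abs_mul, abs_of_pos (by positivity : (0:ℝ) < (2⁻¹:ℝ)^l)]
    rw [h1]
    calc (2⁻¹:ℝ)^l * |aa l| ≤ (rr^L * rr^l) * ((1+c2) * (l:ℝ)^2) := by
          apply mul_le_mul (half_pow_le hLl) (aa_abs_le l) (abs_nonneg _)
          positivity
      _ = (1+c2) * rr^L * (((l:ℕ):ℝ)^2 * rr^l) := by push_cast; ring
  have htail_le : |∑' i : ℕ, hh (i + (L+1))| ≤ (1+c2) * rr^L * K2 := by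
    have h1 : |∑' i : ℕ, hh (i + (L+1))| ≤ ∑' i : ℕ, |hh (i + (L+1))| := by
      simpa [Real.norm_eq_abs] using norm_tsum_le_tsum_norm hshift.norm
    have h2 : ∑' i : ℕ, |hh (i + (L+1))|
        ≤ ∑' i : ℕ, (1+c2) * rr^L * (((i + (L+1) : ℕ):ℝ)^2 * rr^(i + (L+1))) :=
      Summable.tsum_le_tsum hperterm hshift.abs (hshift2.mul_left _)
    have h3 : ∑' i : ℕ, (1+c2) * rr^L * (((i + (L+1) : ℕ):ℝ)^2 * rr^(i + (L+1)))
        = (1+c2) * rr^L * ∑' i : ℕ, (((i + (L+1) : ℕ):ℝ)^2 * rr^(i + (L+1))) :=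
      tsum_mul_left
    have h4 : ∑' i : ℕ, (((i + (L+1) : ℕ):ℝ)^2 * rr^(i + (L+1))) ≤ K2 := by
      have h5 := Summable.sum_add_tsum_nat_add (L+1) hsum2
      have h6 : 0 ≤ ∑ i ∈ Finset.range (L+1), (i:ℝ)^2 * rr^i :=
        Finset.sum_nonneg (fun i _ => by positivity)
      rw [hK2def]
      push_cast at h5 ⊢
      linarith
    have h7 : 0 ≤ (1+c2) * rr^L := by positivity
    calc |∑' i : ℕ, hh (i + (L+1))| ≤ _ := h1
      _ ≤ _ := h2
      _ = _ := h3
      _ ≤ (1+c2) * rr^L * K2 := mul_le_mul_of_nonneg_left h4 h7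
  -- T1 bound
  have hT1 : |∑ l ∈ Finset.Icc 1 L, (2⁻¹:ℝ)^l * (Real.exp (d * aa l) - 1 - d * aa l)|
      ≤ (1+c2)^2 * K4 * d^2 := by
    calc |∑ l ∈ Finset.Icc 1 L, (2⁻¹:ℝ)^l * (Real.exp (d * aa l) - 1 - d * aa l)|
        ≤ ∑ l ∈ Finset.Icc 1 L, |(2⁻¹:ℝ)^l * (Real.exp (d * aa l) - 1 - d * aa l)| :=
          Finset.abs_sum_le_sum_abs _ _
      _ ≤ ∑ l ∈ Finset.Icc 1 L, d^2 * ((1+c2)^2 * ((l:ℝ)^4 * rr^l)) := by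
          apply Finset.sum_le_sum
          intro l hl
          rw [Finset.mem_Icc] at hl
          have hl1 : 1 ≤ l := hl.1
          have hl8 : (l:ℝ) ≤ 8/d := by
            have h1 : (l:ℝ) ≤ (L:ℝ) := by exact_mod_cast hl.2
            have h2 : (L:ℝ) ≤ 8/d := Nat.floor_le (by positivity)
            linarith
          have hkey := key_exp_bound hd hd1 hd2 hl1 hl8
          have habsd : |d * aa l| = d * |aa l| := by
            rw [abs_mul, abs_of_pos hd]
          have hexp : Real.exp |d * aa l| ≤ (Real.sqrt 2)^l :=
            exp_le_sqrt2_pow (by rw [habsd]; exact hkey)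
          have htay := exp_taylor_bound (d * aa l)
          have hpl : (0:ℝ) < (2⁻¹:ℝ)^l := by positivity
          have haal : |aa l| ≤ (1+c2) * (l:ℝ)^2 := aa_abs_le l
          have haasq : (aa l)^2 ≤ ((1+c2) * (l:ℝ)^2)^2 := by
            rw [← sq_abs]
            apply pow_le_pow_left₀ (abs_nonneg _) haal
          have hsq2 : (0:ℝ) < (Real.sqrt 2)^l := by
            have := rr_pos
            unfold rr at this
            positivity
          calc |(2⁻¹:ℝ)^l * (Real.exp (d * aa l) - 1 - d * aa l)|
              = (2⁻¹:ℝ)^l * |Real.exp (d * aa l) - 1 - d * aa l| := by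
                rw [abs_mul, abs_of_pos hpl]
            _ ≤ (2⁻¹:ℝ)^l * ((d * aa l)^2 * Real.exp |d * aa l|) := by
                apply mul_le_mul_of_nonneg_left _ hpl.le
                exact htay
            _ ≤ (2⁻¹:ℝ)^l * ((d * aa l)^2 * (Real.sqrt 2)^l) := by
                apply mul_le_mul_of_nonneg_left _ hpl.le
                apply mul_le_mul_of_nonneg_left hexp (sq_nonneg _)
            _ = (d * aa l)^2 * ((2⁻¹:ℝ)^l * (Real.sqrt 2)^l) := by ring
            _ = (d * aa l)^2 * rr^l := by rw [half_mul_sqrt2_pow]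
            _ ≤ d^2 * ((1+c2) * (l:ℝ)^2)^2 * rr^l := by
                have : (d * aa l)^2 = d^2 * (aa l)^2 := by ring
                rw [this]
                have hrl : (0:ℝ) ≤ rr^l := by positivity
                apply mul_le_mul_of_nonneg_right _ hrl
                exact mul_le_mul_of_nonneg_left haasq (sq_nonneg d)
            _ = d^2 * ((1+c2)^2 * ((l:ℝ)^4 * rr^l)) := by ring
      _ = d^2 * (1+c2)^2 * ∑ l ∈ Finset.Icc 1 L, (l:ℝ)^4 * rr^l := by
          rw [Finset.mul_sum]
          congr 1
          ext l
          ring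
      _ ≤ d^2 * (1+c2)^2 * K4 := by
          apply mul_le_mul_of_nonneg_left _ (by positivity)
          exact Summable.sum_le_tsum _ (fun l _ => by positivity) hsum4
      _ = (1+c2)^2 * K4 * d^2 := by ring
  -- final combination
  have hhalfL : (2⁻¹:ℝ)^L ≤ d^2 := pow_half_L_le hd hd1
  have hrrL : rr^L ≤ d := rr_L_le hd hd1
  have hfinal : |(∑ l ∈ Finset.Icc 1 L,
      (2 : ℝ) ^ (-(l : ℝ)) *
        (2 : ℝ) ^ (d * ((l : ℝ) * Real.logb 2 (l : ℝ) - Sconst * (l : ℝ) / 2))) - 1|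
      ≤ ((1+c2)^2 * K4 + (1+c2) * K2 + 1) * d^2 := by
    rw [hterm, hdecomp, hG, hHsum]
    have hb2 : d * |∑' i : ℕ, hh (i + (L+1))| ≤ (1+c2) * K2 * d^2 := by
      calc d * |∑' i : ℕ, hh (i + (L+1))| ≤ d * ((1+c2) * rr^L * K2) :=
            mul_le_mul_of_nonneg_left htail_le hd.le
        _ ≤ d * ((1+c2) * d * K2) := by
            apply mul_le_mul_of_nonneg_left _ hd.le
            apply mul_le_mul_of_nonneg_right _ hK2nn
            exact mul_le_mul_of_nonneg_left hrrL (by positivity)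
        _ = (1+c2) * K2 * d^2 := by ring
    have habs3 := abs_add_le (∑ l ∈ Finset.Icc 1 L, (2⁻¹:ℝ)^l * (Real.exp (d * aa l) - 1 - d * aa l)
        + d * (- ∑' i : ℕ, hh (i + (L+1)))) (1 - (2⁻¹:ℝ)^L - 1)
    have habs4 := abs_add_le (∑ l ∈ Finset.Icc 1 L, (2⁻¹:ℝ)^l * (Real.exp (d * aa l) - 1 - d * aa l))
        (d * (- ∑' i : ℕ, hh (i + (L+1))))
    have e1 : |d * (- ∑' i : ℕ, hh (i + (L+1)))| = d * |∑' i : ℕ, hh (i + (L+1))| := by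
      rw [abs_mul, abs_neg, abs_of_pos hd]
    have e2 : |1 - (2⁻¹:ℝ)^L - 1| = (2⁻¹:ℝ)^L := by
      rw [show (1:ℝ) - (2⁻¹:ℝ)^L - 1 = -((2⁻¹:ℝ)^L) by ring, abs_neg,
        abs_of_pos (by positivity : (0:ℝ) < (2⁻¹:ℝ)^L)]
    have goal_eq : (∑ l ∈ Finset.Icc 1 L, (2⁻¹:ℝ)^l * (Real.exp (d * aa l) - 1 - d * aa l))
        + d * (- ∑' i : ℕ, hh (i + (L+1))) + (1 - (2⁻¹:ℝ)^L) - 1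
        = ((∑ l ∈ Finset.Icc 1 L, (2⁻¹:ℝ)^l * (Real.exp (d * aa l) - 1 - d * aa l)
        + d * (- ∑' i : ℕ, hh (i + (L+1)))) + (1 - (2⁻¹:ℝ)^L - 1)) := by ring
    rw [goal_eq]
    calc |_| ≤ _ := habs3
      _ ≤ (|∑ l ∈ Finset.Icc 1 L, (2⁻¹:ℝ)^l * (Real.exp (d * aa l) - 1 - d * aa l)|
            + |d * (- ∑' i : ℕ, hh (i + (L+1)))|) + |1 - (2⁻¹:ℝ)^L - 1| := by
          exact add_le_add_left habs4 _
      _ ≤ ((1+c2)^2 * K4 * d^2 + (1+c2) * K2 * d^2) + d^2 := by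
          rw [e1, e2]
          exact add_le_add (add_le_add hT1 hb2) hhalfL
      _ = ((1+c2)^2 * K4 + (1+c2) * K2 + 1) * d^2 := by ring
  -- pass to rpow exponent
  have hκnn : 0 ≤ (1+c2)^2 * K4 + (1+c2) * K2 + 1 := by positivity
  have hrpow : d^2 ≤ d ^ (2 - ε) := by
    have h1 : d^2 = d ^ ((2:ℝ)) := by
      rw [show ((2:ℝ)) = ((2:ℕ):ℝ) by norm_num, Real.rpow_natCast]
    rw [h1]
    exact Real.rpow_le_rpow_of_exponent_ge hd (by linarith) (by linarith)
  calc |(∑ l ∈ Finset.Icc 1 L,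
      (2 : ℝ) ^ (-(l : ℝ)) *
        (2 : ℝ) ^ (d * ((l : ℝ) * Real.logb 2 (l : ℝ) - Sconst * (l : ℝ) / 2))) - 1|
      ≤ ((1+c2)^2 * K4 + (1+c2) * K2 + 1) * d^2 := hfinal
    _ ≤ ((1+c2)^2 * K4 + (1+c2) * K2 + 1) * d ^ (2 - ε) :=
        mul_le_mul_of_nonneg_left hrpow hκnn
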